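/- Fix δ ∈ (0,1) and ε > 0. Then, as the integer N → ∞, the cumulative weight up to level ⌊ log log N / (log 2 + ε) ⌋ tends to 0: Σ_{ℓ=0}^{⌊ log log N / (log 2 + ε) ⌋} p_ℓ^{(N,δ)} → 0. In particular, for all sufficiently large N, any k with Σ_{ℓ=0}^{k} p_ℓ^{(N,δ)} ≥ 1/2 satisfies k > log log N / (log 2 + ε). -/

import Mathlib

open Filter Finset

namespace MullerRatchet14

/-- Auxiliary recursion computing the pair `(p_k, Σ_{ℓ≤k} p_ℓ)` of the equilibrium
type-frequency weights of the tournament ratchet. -/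
noncomputable def pAux (ρ : ℝ) : ℕ → ℝ × ℝ
  | 0 => (1 - ρ, 1 - ρ)
  | k+1 =>
    let a := ρ - 1 + 2 * (pAux ρ k).2
    let p := -(1/2) * a + Real.sqrt ((1/4) * a^2 + ρ * (pAux ρ k).1)
    (p, (pAux ρ k).2 + p)

/-- The equilibrium weight `p_k^{(ρ)}`. -/
noncomputable def pseq (ρ : ℝ) (k : ℕ) : ℝ := (pAux ρ k).1

lemma sqrt_quad_le (a x : ℝ) (hx : 0 ≤ x) :
    Real.sqrt ((1/4) * a^2 + x) ≤ |a|/2 + Real.sqrt x := by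
  have h1 : (1/4) * a^2 + x ≤ (|a|/2 + Real.sqrt x)^2 := by
    have : (|a|/2 + Real.sqrt x)^2 = (|a|/2)^2 + 2*(|a|/2)*Real.sqrt x + (Real.sqrt x)^2 := by ring
    rw [this, Real.sq_sqrt hx]
    have h2 : (|a|/2)^2 = (1/4)*a^2 := by rw [div_pow, sq_abs]; ring
    nlinarith [Real.sqrt_nonneg x, abs_nonneg a]
  calc Real.sqrt ((1/4) * a^2 + x) ≤ Real.sqrt ((|a|/2 + Real.sqrt x)^2) := Real.sqrt_le_sqrt h1
    _ = |a|/2 + Real.sqrt x := Real.sqrt_sq (by positivity)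

lemma pAux_nonneg {ρ : ℝ} (hρ0 : 0 ≤ ρ) (hρ1 : ρ ≤ 1) (k : ℕ) :
    0 ≤ (pAux ρ k).1 ∧ 0 ≤ (pAux ρ k).2 := by
  induction k with
  | zero => constructor <;> (show (0:ℝ) ≤ 1 - ρ; linarith)
  | succ k ih =>
    have hp : 0 ≤ (pAux ρ (k+1)).1 := by
      show 0 ≤ -(1/2) * (ρ - 1 + 2 * (pAux ρ k).2) +
        Real.sqrt ((1/4) * (ρ - 1 + 2 * (pAux ρ k).2)^2 + ρ * (pAux ρ k).1)
      set a := ρ - 1 + 2 * (pAux ρ k).2 with ha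
      have h1 : Real.sqrt ((1/4)*a^2) ≤ Real.sqrt ((1/4)*a^2 + ρ * (pAux ρ k).1) :=
        Real.sqrt_le_sqrt (by nlinarith [ih.1])
      have h2 : Real.sqrt ((1/4)*a^2) = |a|/2 := by
        rw [show (1/4)*a^2 = (a/2)^2 by ring, Real.sqrt_sq_eq_abs, abs_div]
        simp
      nlinarith [abs_nonneg a, le_abs_self a]
    exact ⟨hp, by
      show 0 ≤ (pAux ρ k).2 + (pAux ρ (k+1)).1
      linarith [ih.2]⟩

lemma pAux_snd (ρ : ℝ) (k : ℕ) : (pAux ρ k).2 = ∑ l ∈ Finset.range (k+1), pseq ρ l := by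
  induction k with
  | zero => simp [pAux, pseq]
  | succ k ih =>
    rw [Finset.sum_range_succ, ← ih]
    rfl

lemma pseq_step_le {ρ : ℝ} (hρ0 : 0 ≤ ρ) (hρ1 : ρ ≤ 1) (k : ℕ) :
    pseq ρ (k+1) ≤ Real.sqrt (pseq ρ k) + (1 - ρ) := by
  have hnn := pAux_nonneg hρ0 hρ1 k
  show -(1/2) * (ρ - 1 + 2 * (pAux ρ k).2) +
      Real.sqrt ((1/4) * (ρ - 1 + 2 * (pAux ρ k).2)^2 + ρ * (pAux ρ k).1)
      ≤ Real.sqrt (pseq ρ k) + (1 - ρ)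
  set a := ρ - 1 + 2 * (pAux ρ k).2 with ha
  have hx : (0:ℝ) ≤ ρ * (pAux ρ k).1 := mul_nonneg hρ0 hnn.1
  have h1 := sqrt_quad_le a (ρ * (pAux ρ k).1) hx
  have h2 : Real.sqrt (ρ * (pAux ρ k).1) ≤ Real.sqrt (pseq ρ k) := by
    apply Real.sqrt_le_sqrt
    unfold pseq
    nlinarith [hnn.1]
  have h3 : |a|/2 - a/2 ≤ 1 - ρ := by
    rcases abs_cases a with ⟨h, _⟩ | ⟨h, _⟩
    · rw [h]; linarith [hnn.2]
    · rw [h]; linarith [hnn.2]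
  linarith

lemma pseq_le_rpow {ρ : ℝ} (hρ0 : 0 < ρ) (hρ1 : ρ < 1) (k : ℕ) :
    pseq ρ k ≤ 3 * (1 - ρ) ^ (((2:ℝ)⁻¹) ^ k) := by
  set s := 1 - ρ with hs
  have hs0 : 0 < s := by simp [hs]; linarith
  have hs1 : s ≤ 1 := by simp [hs]; linarith
  induction k with
  | zero =>
    have : pseq ρ 0 = s := rfl
    rw [this, pow_zero, Real.rpow_one]
    linarith
  | succ k ih =>
    have step := pseq_step_le (le_of_lt hρ0) (le_of_lt hρ1) k
    have e2 : ((2:ℝ)⁻¹) ^ (k+1) ≤ 1 := by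
      apply pow_le_one₀ <;> norm_num
    have hsle : s ≤ s ^ (((2:ℝ)⁻¹) ^ (k+1)) := by
      calc s = s ^ (1:ℝ) := (Real.rpow_one s).symm
        _ ≤ s ^ (((2:ℝ)⁻¹) ^ (k+1)) := Real.rpow_le_rpow_of_exponent_ge hs0 hs1 e2
    have hsq : Real.sqrt (pseq ρ k) ≤ Real.sqrt 3 * s ^ (((2:ℝ)⁻¹) ^ (k+1)) := by
      have h1 : Real.sqrt (pseq ρ k) ≤ Real.sqrt (3 * s ^ (((2:ℝ)⁻¹) ^ k)) :=
        Real.sqrt_le_sqrt ih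
      have h2 : Real.sqrt (3 * s ^ (((2:ℝ)⁻¹) ^ k)) =
          Real.sqrt 3 * Real.sqrt (s ^ (((2:ℝ)⁻¹) ^ k)) := by
        rw [Real.sqrt_mul (by norm_num)]
      have h3 : Real.sqrt (s ^ (((2:ℝ)⁻¹) ^ k)) = s ^ (((2:ℝ)⁻¹) ^ (k+1)) := by
        rw [Real.sqrt_eq_rpow, ← Real.rpow_natCast, ← Real.rpow_mul (le_of_lt hs0)]
        · norm_num [pow_succ]
      calc Real.sqrt (pseq ρ k) ≤ _ := h1
        _ = _ := h2
        _ = Real.sqrt 3 * s ^ (((2:ℝ)⁻¹) ^ (k+1)) := by rw [h3]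
    have h4 : Real.sqrt 3 ≤ 2 := by
      rw [show (2:ℝ) = Real.sqrt 4 by rw [show (4:ℝ) = 2^2 by norm_num, Real.sqrt_sq]; norm_num]
      exact Real.sqrt_le_sqrt (by norm_num)
    have hpos : (0:ℝ) ≤ s ^ (((2:ℝ)⁻¹) ^ (k+1)) := Real.rpow_nonneg (le_of_lt hs0) _
    calc pseq ρ (k+1) ≤ Real.sqrt (pseq ρ k) + s := step
      _ ≤ Real.sqrt 3 * s ^ (((2:ℝ)⁻¹) ^ (k+1)) + s ^ (((2:ℝ)⁻¹) ^ (k+1)) := by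
          gcongr
      _ ≤ 3 * s ^ (((2:ℝ)⁻¹) ^ (k+1)) := by nlinarith

lemma sum_pseq_le {ρ : ℝ} (hρ0 : 0 < ρ) (hρ1 : ρ < 1) (K : ℕ) :
    ∑ l ∈ Finset.range (K+1), pseq ρ l ≤ (K+1) * (3 * (1 - ρ) ^ (((2:ℝ)⁻¹) ^ K)) := by
  have hs0 : (0:ℝ) < 1 - ρ := by linarith
  have hs1 : (1:ℝ) - ρ ≤ 1 := by linarith
  have h : ∀ l ∈ Finset.range (K+1), pseq ρ l ≤ 3 * (1 - ρ) ^ (((2:ℝ)⁻¹) ^ K) := by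
    intro l hl
    have hlK : l ≤ K := Nat.lt_succ_iff.mp (Finset.mem_range.mp hl)
    calc pseq ρ l ≤ 3 * (1 - ρ) ^ (((2:ℝ)⁻¹) ^ l) := pseq_le_rpow hρ0 hρ1 l
      _ ≤ 3 * (1 - ρ) ^ (((2:ℝ)⁻¹) ^ K) := by
        have : ((2:ℝ)⁻¹) ^ K ≤ ((2:ℝ)⁻¹) ^ l :=
          pow_le_pow_of_le_one (by norm_num) (by norm_num) hlK
        have := Real.rpow_le_rpow_of_exponent_ge hs0 hs1 this
        linarith
  calc ∑ l ∈ Finset.range (K+1), pseq ρ l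
      ≤ ∑ _l ∈ Finset.range (K+1), (3 * (1 - ρ) ^ (((2:ℝ)⁻¹) ^ K)) := Finset.sum_le_sum h
    _ = (K+1) * (3 * (1 - ρ) ^ (((2:ℝ)⁻¹) ^ K)) := by
        rw [Finset.sum_const, Finset.card_range]; push_cast; ring

lemma tendsto_aux (a b : ℝ) (ha : 0 < a) :
    Filter.Tendsto (fun L : ℝ => 3 * (b * L + 1) * Real.exp (-(a * L))) atTop (nhds 0) := by
  have h1 : Filter.Tendsto (fun L : ℝ => a * L) atTop atTop :=
    Filter.Tendsto.const_mul_atTop ha tendsto_id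
  have h2 : Filter.Tendsto (fun x : ℝ => x ^ 1 * Real.exp (-x)) atTop (nhds 0) :=
    Real.tendsto_pow_mul_exp_neg_atTop_nhds_zero 1
  have h3 : Filter.Tendsto (fun L : ℝ => (a*L) * Real.exp (-(a*L))) atTop (nhds 0) := by
    have := h2.comp h1
    simpa [Function.comp_def] using this
  have h4 : Filter.Tendsto (fun L : ℝ => Real.exp (-(a*L))) atTop (nhds 0) := by
    have h := Real.tendsto_exp_neg_atTop_nhds_zero.comp h1
    exact h
  have h5 : Filter.Tendsto
      (fun L : ℝ => (3*b/a) * ((a*L) * Real.exp (-(a*L))) + 3 * Real.exp (-(a*L)))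
      atTop (nhds 0) := by
    have := (h3.const_mul (3*b/a)).add (h4.const_mul 3)
    simpa using this
  refine h5.congr (fun L => ?_)
  field_simp

/-- For fixed `δ ∈ (0,1)` and `ε > 0`, the cumulative weight of `p^{(N,δ)}` up to level
`⌊log log N/(log 2 + ε)⌋` tends to `0`; in particular, eventually any `k` with cumulative
weight at least `1/2` satisfies `k > log log N/(log 2 + ε)`. -/
theorem statement14 (δ ε : ℝ) (hδ0 : 0 < δ) (hδ1 : δ < 1) (hε : 0 < ε) :
    Tendsto (fun N : ℕ =>
        ∑ l ∈ Finset.range (⌊Real.log (Real.log N) / (Real.log 2 + ε)⌋₊ + 1),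
          pseq (1 - (N:ℝ)^(-δ)) l) atTop (nhds 0) ∧
    ∃ N₀ : ℕ, ∀ N : ℕ, N₀ ≤ N → ∀ k : ℕ,
      1/2 ≤ ∑ l ∈ Finset.range (k+1), pseq (1 - (N:ℝ)^(-δ)) l →
      Real.log (Real.log N) / (Real.log 2 + ε) < (k : ℝ) := by
  have hl2 : (0:ℝ) < Real.log 2 := Real.log_pos (by norm_num)
  have hden : (0:ℝ) < Real.log 2 + ε := by linarith
  set c : ℝ := ε / (Real.log 2 + ε) with hc
  have hc0 : 0 < c := div_pos hε hden
  set b : ℝ := (Real.log 2 + ε)⁻¹ with hb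
  -- main bound, pointwise for N ≥ 3
  have key : ∀ N : ℕ, 3 ≤ N →
      ∑ l ∈ Finset.range (⌊Real.log (Real.log N) / (Real.log 2 + ε)⌋₊ + 1),
        pseq (1 - (N:ℝ)^(-δ)) l
      ≤ 3 * (b * Real.log (Real.log N) + 1) * Real.exp (-(δ * c * Real.log (Real.log N))) := by
    intro N hN
    have hN1 : (1:ℝ) < (N:ℝ) := by exact_mod_cast Nat.lt_of_lt_of_le (by norm_num) hN
    have hN0 : (0:ℝ) < (N:ℝ) := by linarith
    set lam := Real.log N with hlam
    have hlam1 : 1 ≤ lam := by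
      rw [hlam, show (1:ℝ) = Real.log (Real.exp 1) by simp]
      apply Real.log_le_log (Real.exp_pos 1)
      calc Real.exp 1 ≤ 3 := by
            have := Real.exp_one_lt_d9
            linarith
        _ ≤ (N:ℝ) := by exact_mod_cast hN
    have hlam0 : 0 < lam := by linarith
    set L := Real.log lam with hL
    have hL0 : 0 ≤ L := Real.log_nonneg hlam1
    set M := L / (Real.log 2 + ε) with hM
    have hM0 : 0 ≤ M := div_nonneg hL0 (le_of_lt hden)
    set K := ⌊M⌋₊ with hK
    have hKM : (K:ℝ) ≤ M := Nat.floor_le hM0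
    set s := (N:ℝ)^(-δ) with hs
    have hs0 : 0 < s := Real.rpow_pos_of_pos hN0 _
    have hs1 : s < 1 := Real.rpow_lt_one_of_one_lt_of_neg hN1 (by linarith)
    have hρ0 : 0 < 1 - s := by linarith
    have hρ1 : 1 - s < 1 := by linarith
    have hsum := sum_pseq_le hρ0 hρ1 K
    have hsub : (1:ℝ) - (1 - s) = s := by ring
    rw [hsub] at hsum
    -- identify s ^ ((2⁻¹)^K) = exp (-(δ * lam) * (2⁻¹)^K)
    have hlogs : Real.log s = -δ * lam := by
      rw [hs, Real.log_rpow hN0]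
    have hrw : s ^ (((2:ℝ)⁻¹) ^ K) = Real.exp (-(δ * lam) * ((2:ℝ)⁻¹) ^ K) := by
      rw [Real.rpow_def_of_pos hs0, hlogs]
      ring_nf
    -- bound the exponent
    have hhalf : ((2:ℝ)⁻¹) ^ K = Real.exp (-((K:ℝ) * Real.log 2)) := by
      have h2 : (2:ℝ)⁻¹ = Real.exp (-(Real.log 2)) := by
        rw [Real.exp_neg, Real.exp_log (by norm_num : (0:ℝ) < 2)]
      rw [h2, ← Real.exp_nat_mul]
      ring_nf
    have hlamE : lam = Real.exp L := (Real.exp_log hlam0).symm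
    have hexp1 : Real.exp (c * L) ≤ lam * ((2:ℝ)⁻¹) ^ K := by
      rw [hhalf, hlamE, ← Real.exp_add]
      apply Real.exp_le_exp.mpr
      have h1 : (K:ℝ) * Real.log 2 ≤ M * Real.log 2 := by
        apply mul_le_mul_of_nonneg_right hKM (le_of_lt hl2)
      have h2 : L - M * Real.log 2 = c * L := by
        rw [hM, hc]
        field_simp
        ring
      linarith
    have hexp2 : δ * c * L ≤ δ * lam * ((2:ℝ)⁻¹) ^ K := by
      have h1 : c * L + 1 ≤ Real.exp (c * L) := by
        have := Real.add_one_le_exp (c * L)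
        linarith
      have h2 : c * L ≤ lam * ((2:ℝ)⁻¹) ^ K := by linarith
      calc δ * c * L = δ * (c * L) := by ring
        _ ≤ δ * (lam * ((2:ℝ)⁻¹) ^ K) := mul_le_mul_of_nonneg_left h2 (le_of_lt hδ0)
        _ = δ * lam * ((2:ℝ)⁻¹) ^ K := by ring
    have hexpfinal : s ^ (((2:ℝ)⁻¹) ^ K) ≤ Real.exp (-(δ * c * L)) := by
      rw [hrw]
      apply Real.exp_le_exp.mpr
      have hre : -(δ * lam) * (((2:ℝ)⁻¹) ^ K) = -(δ * lam * (((2:ℝ)⁻¹) ^ K)) := by ring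
      rw [hre]
      linarith [hexp2]
    have hK1 : (K:ℝ) + 1 ≤ b * L + 1 := by
      have : M = b * L := by rw [hM, hb]; field_simp
      linarith [hKM, this ▸ hKM]
    calc ∑ l ∈ Finset.range (K+1), pseq (1 - s) l
        ≤ (K+1) * (3 * s ^ (((2:ℝ)⁻¹) ^ K)) := hsum
      _ ≤ (b * L + 1) * (3 * Real.exp (-(δ * c * L))) := by
          have hb0 : (0:ℝ) ≤ b := by rw [hb]; exact inv_nonneg.mpr (le_of_lt hden)
          have hbL : (0:ℝ) ≤ b * L := mul_nonneg hb0 hL0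
          have hrp : (0:ℝ) ≤ s ^ (((2:ℝ)⁻¹) ^ K) := Real.rpow_nonneg (le_of_lt hs0) _
          apply mul_le_mul
          · push_cast; linarith
          · linarith [hexpfinal]
          · linarith
          · linarith
      _ = 3 * (b * L + 1) * Real.exp (-(δ * c * L)) := by ring
  -- composed tendsto
  have hLtend : Tendsto (fun N : ℕ => Real.log (Real.log N)) atTop atTop :=
    Real.tendsto_log_atTop.comp (Real.tendsto_log_atTop.comp tendsto_natCast_atTop_atTop)
  have htend0 : Tendsto (fun N : ℕ =>
      3 * (b * Real.log (Real.log N) + 1) * Real.exp (-(δ * c * Real.log (Real.log N))))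
      atTop (nhds 0) :=
    (tendsto_aux (δ * c) b (by positivity)).comp hLtend
  have hnonneg : ∀ᶠ N : ℕ in atTop, 0 ≤
      ∑ l ∈ Finset.range (⌊Real.log (Real.log N) / (Real.log 2 + ε)⌋₊ + 1),
        pseq (1 - (N:ℝ)^(-δ)) l := by
    filter_upwards [eventually_ge_atTop 3] with N hN
    apply Finset.sum_nonneg
    intro l _
    have hN1 : (1:ℝ) < (N:ℝ) := by exact_mod_cast Nat.lt_of_lt_of_le (by norm_num) hN
    have hs0 : 0 < (N:ℝ)^(-δ) := Real.rpow_pos_of_pos (by linarith) _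
    have hs1 : (N:ℝ)^(-δ) < 1 := Real.rpow_lt_one_of_one_lt_of_neg hN1 (by linarith)
    exact (pAux_nonneg (by linarith) (by linarith) l).1
  have hle : ∀ᶠ N : ℕ in atTop,
      ∑ l ∈ Finset.range (⌊Real.log (Real.log N) / (Real.log 2 + ε)⌋₊ + 1),
        pseq (1 - (N:ℝ)^(-δ)) l ≤
      3 * (b * Real.log (Real.log N) + 1) * Real.exp (-(δ * c * Real.log (Real.log N))) := by
    filter_upwards [eventually_ge_atTop 3] with N hN
    exact key N hN
  have part1 : Tendsto (fun N : ℕ =>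
      ∑ l ∈ Finset.range (⌊Real.log (Real.log N) / (Real.log 2 + ε)⌋₊ + 1),
        pseq (1 - (N:ℝ)^(-δ)) l) atTop (nhds 0) :=
    squeeze_zero' hnonneg hle htend0
  refine ⟨part1, ?_⟩
  have hsmall : ∀ᶠ N : ℕ in atTop,
      ∑ l ∈ Finset.range (⌊Real.log (Real.log N) / (Real.log 2 + ε)⌋₊ + 1),
        pseq (1 - (N:ℝ)^(-δ)) l < 1/2 :=
    part1.eventually_lt_const (by norm_num)
  obtain ⟨N₁, hN₁⟩ := eventually_atTop.mp (hsmall.and (eventually_ge_atTop 3))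
  refine ⟨N₁ + 3, fun N hN k hk => ?_⟩
  obtain ⟨hlt, hN3⟩ := hN₁ N (by omega)
  by_contra hcon
  push_neg at hcon
  have hkK : k ≤ ⌊Real.log (Real.log N) / (Real.log 2 + ε)⌋₊ := Nat.le_floor hcon
  have hN1 : (1:ℝ) < (N:ℝ) := by exact_mod_cast Nat.lt_of_lt_of_le (by norm_num) hN3
  have hs0 : 0 < (N:ℝ)^(-δ) := Real.rpow_pos_of_pos (by linarith) _
  have hs1 : (N:ℝ)^(-δ) < 1 := Real.rpow_lt_one_of_one_lt_of_neg hN1 (by linarith)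
  have hmono : ∑ l ∈ Finset.range (k+1), pseq (1 - (N:ℝ)^(-δ)) l ≤
      ∑ l ∈ Finset.range (⌊Real.log (Real.log N) / (Real.log 2 + ε)⌋₊ + 1),
        pseq (1 - (N:ℝ)^(-δ)) l := by
    apply Finset.sum_le_sum_of_subset_of_nonneg
    · exact Finset.range_subset_range.mpr (by omega)
    · intro l _ _
      exact (pAux_nonneg (by linarith) (by linarith) l).1
  linarith

end MullerRatchet14
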